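/- Let L : ℝ × (0, ∞) → ℝ be twice continuously differentiable and suppose that (i) L(F, G) = F·∂L/∂F + G·∂L/∂G at every point (vanishing scale anomaly) and (ii) ∂²L/∂F² = 0 at every point. Then L is linear: there exist constants a, c ∈ ℝ such that L(F, G) = a·F + c·G for all (F, G) ∈ ℝ × (0, ∞). Equivalently, in the absence of scale anomaly the only Lagrangian whose effective geometry coincides (conformally) with the Minkowski one, i.e. with L_{FF} ≡ 0, is the linear Maxwell theory. -/

import Mathlib

/-- Partial derivative with respect to the first variable F. -/
noncomputable def pderivF (L : ℝ × ℝ → ℝ) (p : ℝ × ℝ) : ℝ := fderiv ℝ L p (1, 0)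

/-- Partial derivative with respect to the second variable G. -/
noncomputable def pderivG (L : ℝ × ℝ → ℝ) (p : ℝ × ℝ) : ℝ := fderiv ℝ L p (0, 1)

/-- In the absence of scale anomaly (Euler homogeneity L = F L_F + G L_G), the only C²
Lagrangian on ℝ × (0, ∞) with L_FF ≡ 0 (so that the effective geometry is conformally
Minkowskian) is the linear Maxwell theory L = a F + c G. -/
theorem zero_anomaly_and_LFF_zero_implies_linear
    (L : ℝ × ℝ → ℝ) (hL : ContDiffOn ℝ 2 L {p : ℝ × ℝ | 0 < p.2})
    (euler : ∀ p ∈ {p : ℝ × ℝ | 0 < p.2},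
      L p = p.1 * pderivF L p + p.2 * pderivG L p)
    (hLFF : ∀ p ∈ {p : ℝ × ℝ | 0 < p.2}, pderivF (pderivF L) p = 0) :
    ∃ a c : ℝ, ∀ p ∈ {p : ℝ × ℝ | 0 < p.2}, L p = a * p.1 + c * p.2 := by
  set U : Set (ℝ × ℝ) := {p : ℝ × ℝ | 0 < p.2} with hUdef
  have hU : IsOpen U := isOpen_lt continuous_const continuous_snd
  have hconv : Convex ℝ U := by
    have : U = Prod.snd ⁻¹' Set.Ioi (0 : ℝ) := rfl
    rw [this]
    exact (convex_Ioi (0 : ℝ)).linear_preimage (LinearMap.snd ℝ ℝ ℝ)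
  set e1 : ℝ × ℝ := (1, 0) with he1
  set e2 : ℝ × ℝ := (0, 1) with he2
  -- basic differentiability facts at each point of U
  have hCAt : ∀ p ∈ U, ContDiffAt ℝ 2 L p := fun p hp =>
    hL.contDiffAt (hU.mem_nhds hp)
  have hd1 : ∀ p ∈ U, DifferentiableAt ℝ L p := fun p hp =>
    (hCAt p hp).differentiableAt (by norm_num)
  have hd2 : ∀ p ∈ U, DifferentiableAt ℝ (fderiv ℝ L) p := fun p hp =>
    ((hCAt p hp).fderiv_right (m := 1) (by norm_num)).differentiableAt (by norm_num)
  -- pderivF L and pderivG L have derivatives expressed through the second derivative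
  have hDF : ∀ p ∈ U, HasFDerivAt (pderivF L)
      ((ContinuousLinearMap.apply ℝ ℝ e1).comp (fderiv ℝ (fderiv ℝ L) p)) p := by
    intro p hp
    exact ((ContinuousLinearMap.apply ℝ ℝ e1).hasFDerivAt).comp p (hd2 p hp).hasFDerivAt
  have hDG : ∀ p ∈ U, HasFDerivAt (pderivG L)
      ((ContinuousLinearMap.apply ℝ ℝ e2).comp (fderiv ℝ (fderiv ℝ L) p)) p := by
    intro p hp
    exact ((ContinuousLinearMap.apply ℝ ℝ e2).hasFDerivAt).comp p (hd2 p hp).hasFDerivAt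
  -- the second derivative vanishes identically on U
  have hB0 : ∀ p ∈ U, ∀ v : ℝ × ℝ, fderiv ℝ (fderiv ℝ L) p v = 0 := by
    intro p hp
    set B := fderiv ℝ (fderiv ℝ L) p with hBdef
    -- L_FF = 0
    have hBe11 : B e1 e1 = 0 := by
      have h1 : pderivF (pderivF L) p = B e1 e1 := by
        have := (hDF p hp).fderiv
        simp only [pderivF, this]
        rfl
      rw [← h1]; exact hLFF p hp
    -- symmetry of B
    have hsymm : ∀ v w, B v w = B w v := (hCAt p hp).isSymmSndFDerivAt (by simp)
    -- differentiate the Euler identity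
    have hΦ : HasFDerivAt
        (fun q : ℝ × ℝ => q.1 * pderivF L q + q.2 * pderivG L q)
        ((p.1 • ((ContinuousLinearMap.apply ℝ ℝ e1).comp B) +
           pderivF L p • ContinuousLinearMap.fst ℝ ℝ ℝ) +
         (p.2 • ((ContinuousLinearMap.apply ℝ ℝ e2).comp B) +
           pderivG L p • ContinuousLinearMap.snd ℝ ℝ ℝ)) p :=
      (hasFDerivAt_fst.mul (hDF p hp)).add (hasFDerivAt_snd.mul (hDG p hp))
    have hEq : (fun q : ℝ × ℝ => q.1 * pderivF L q + q.2 * pderivG L q) =ᶠ[nhds p] L :=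
      Filter.eventuallyEq_of_mem (hU.mem_nhds hp) (fun q hq => (euler q hq).symm)
    have hΦ' : HasFDerivAt L
        ((p.1 • ((ContinuousLinearMap.apply ℝ ℝ e1).comp B) +
           pderivF L p • ContinuousLinearMap.fst ℝ ℝ ℝ) +
         (p.2 • ((ContinuousLinearMap.apply ℝ ℝ e2).comp B) +
           pderivG L p • ContinuousLinearMap.snd ℝ ℝ ℝ)) p :=
      hΦ.congr_of_eventuallyEq hEq.symm
    have huniq := hΦ'.fderiv
    -- the first derivative, applied to a vector
    have hfd : ∀ v : ℝ × ℝ, fderiv ℝ L p v = v.1 * pderivF L p + v.2 * pderivG L p := by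
      intro v
      have hv : v = v.1 • e1 + v.2 • e2 := by simp [he1, he2, Prod.ext_iff]
      calc fderiv ℝ L p v = fderiv ℝ L p (v.1 • e1 + v.2 • e2) := by rw [← hv]
        _ = v.1 * fderiv ℝ L p e1 + v.2 * fderiv ℝ L p e2 := by
            rw [map_add, map_smul, map_smul]; rfl
        _ = v.1 * pderivF L p + v.2 * pderivG L p := rfl
    have key : ∀ v : ℝ × ℝ, p.1 * B v e1 + p.2 * B v e2 = 0 := by
      intro v
      have h1 := congrArg (fun (T : ℝ × ℝ →L[ℝ] ℝ) => T v) huniq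
      simp only [ContinuousLinearMap.add_apply, ContinuousLinearMap.smul_apply,
        ContinuousLinearMap.comp_apply, ContinuousLinearMap.apply_apply,
        ContinuousLinearMap.coe_fst', ContinuousLinearMap.coe_snd', smul_eq_mul] at h1
      rw [hfd v] at h1
      linarith
    have hp2 : 0 < p.2 := hp
    have hBe12 : B e1 e2 = 0 := by
      have := key e1
      rw [hBe11] at this
      have : p.2 * B e1 e2 = 0 := by linarith
      exact (mul_eq_zero.mp this).resolve_left (ne_of_gt hp2)
    have hBe21 : B e2 e1 = 0 := by rw [hsymm]; exact hBe12
    have hBe22 : B e2 e2 = 0 := by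
      have := key e2
      rw [hBe21] at this
      have : p.2 * B e2 e2 = 0 := by linarith
      exact (mul_eq_zero.mp this).resolve_left (ne_of_gt hp2)
    intro v
    have hv : v = v.1 • e1 + v.2 • e2 := by simp [he1, he2, Prod.ext_iff]
    have : B v = B (v.1 • e1 + v.2 • e2) := by rw [← hv]
    rw [this, map_add, map_smul, map_smul]
    refine ContinuousLinearMap.ext fun w => ?_
    have hw : w = w.1 • e1 + w.2 • e2 := by simp [he1, he2, Prod.ext_iff]
    simp only [ContinuousLinearMap.add_apply, ContinuousLinearMap.smul_apply, smul_eq_mul,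
      ContinuousLinearMap.zero_apply]
    rw [hw, map_add, map_smul, map_add, map_smul, map_smul, map_smul]
    simp [hBe11, hBe12, hBe21, hBe22]
  -- hence pderivF L and pderivG L have vanishing derivative on U
  have hDF0 : ∀ p ∈ U, HasFDerivAt (pderivF L) (0 : ℝ × ℝ →L[ℝ] ℝ) p := by
    intro p hp
    have h := hDF p hp
    have : (ContinuousLinearMap.apply ℝ ℝ e1).comp (fderiv ℝ (fderiv ℝ L) p) = 0 := by
      refine ContinuousLinearMap.ext fun v => ?_
      simp [hB0 p hp v]
    rwa [this] at h
  have hDG0 : ∀ p ∈ U, HasFDerivAt (pderivG L) (0 : ℝ × ℝ →L[ℝ] ℝ) p := by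
    intro p hp
    have h := hDG p hp
    have : (ContinuousLinearMap.apply ℝ ℝ e2).comp (fderiv ℝ (fderiv ℝ L) p) = 0 := by
      refine ContinuousLinearMap.ext fun v => ?_
      simp [hB0 p hp v]
    rwa [this] at h
  -- so they are constant on the convex set U
  have hmem : ((0 : ℝ), (1 : ℝ)) ∈ U := by norm_num [hUdef]
  have hconstF : ∀ p ∈ U, pderivF L p = pderivF L (0, 1) := by
    intro p hp
    exact hconv.is_const_of_fderivWithin_eq_zero
      (fun q hq => ((hDF0 q hq).differentiableAt).differentiableWithinAt)
      (fun q hq => by rw [fderivWithin_of_isOpen hU hq]; exact (hDF0 q hq).fderiv) hp hmem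
  have hconstG : ∀ p ∈ U, pderivG L p = pderivG L (0, 1) := by
    intro p hp
    exact hconv.is_const_of_fderivWithin_eq_zero
      (fun q hq => ((hDG0 q hq).differentiableAt).differentiableWithinAt)
      (fun q hq => by rw [fderivWithin_of_isOpen hU hq]; exact (hDG0 q hq).fderiv) hp hmem
  refine ⟨pderivF L (0, 1), pderivG L (0, 1), fun p hp => ?_⟩
  rw [euler p hp, hconstF p hp, hconstG p hp]
  ring
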